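/- Let r ≥ 3 and s ≥ 2. The r-uniform hypergraph H_3(r,s) with vertex set {v_1, v_2} ∪ U_1 ∪ ... ∪ U_s (the U_i pairwise disjoint, each of size r-1) and edges e_{i,j} = U_i ∪ {v_j} for 1 ≤ i ≤ s and j ∈ {1,2} is 2-connected but contains no Berge cycle of length greater than 4. -/

import Mathlib

def incGraph {α : Type*} (H : Finset (Finset α)) :
    SimpleGraph (α ⊕ {e : Finset α // e ∈ H}) where
  Adj x y :=
    match x, y with
    | Sum.inl a, Sum.inr e => a ∈ e.1
    | Sum.inr e, Sum.inl a => a ∈ e.1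
    | _, _ => False
  symm := ⟨by rintro (a | e) (b | f) h <;> exact h⟩
  loopless := ⟨by rintro (a | e) h <;> exact h⟩

/-- A hypergraph is 2-connected if its incidence bipartite graph is 2-connected. -/
def TwoConnected {V : Type*} (G : SimpleGraph V) : Prop :=
  3 ≤ Nat.card V ∧ ∀ v : V, (G.induce {w | w ≠ v}).Connected

def IsBergeCycle {α : Type*} (H : Finset (Finset α)) (c : ℕ)
    (v : ZMod c → α) (e : ZMod c → Finset α) : Prop :=
  Function.Injective v ∧ Function.Injective e ∧
    ∀ i : ZMod c, e i ∈ H ∧ v i ∈ e i ∧ v (i + 1) ∈ e i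

def HasBergeCycle {α : Type*} (H : Finset (Finset α)) (c : ℕ) : Prop :=
  ∃ v e, IsBergeCycle H c v e

/-- The `r`-uniform hypergraph `H_3(r,s)` with vertex set `{v_1,v_2} ∪ U_1 ∪ … ∪ U_s`
(`|U_i| = r-1`) and edges `e_{i,j} = U_i ∪ {v_j}`. -/
def H3 (r s : ℕ) : Finset (Finset (Fin 2 ⊕ Fin s × Fin (r - 1))) :=
  Finset.image (fun p : Fin s × Fin 2 =>
    insert (Sum.inl p.2)
      (Finset.univ.image (fun a : Fin (r - 1) => Sum.inr (p.1, a))))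
    Finset.univ

namespace H3Aux

abbrev Vt (r s : ℕ) := Fin 2 ⊕ Fin s × Fin (r - 1)

abbrev Nd (r s : ℕ) := Vt r s ⊕ {e : Finset (Vt r s) // e ∈ H3 r s}

def EE (r s : ℕ) (i : Fin s) (j : Fin 2) : Finset (Vt r s) :=
  insert (Sum.inl j) (Finset.univ.image (fun a : Fin (r - 1) => Sum.inr (i, a)))

lemma EE_mem_H3 (r s : ℕ) (i : Fin s) (j : Fin 2) : EE r s i j ∈ H3 r s := by
  simp only [H3, Finset.mem_image]
  exact ⟨(i, j), Finset.mem_univ _, rfl⟩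

lemma mem_H3 {r s : ℕ} {f : Finset (Vt r s)} (hf : f ∈ H3 r s) :
    ∃ i j, f = EE r s i j := by
  simp only [H3, Finset.mem_image] at hf
  obtain ⟨⟨i, j⟩, -, h⟩ := hf
  exact ⟨i, j, h.symm⟩

lemma mem_EE {r s : ℕ} {x : Vt r s} {i : Fin s} {j : Fin 2} :
    x ∈ EE r s i j ↔ x = Sum.inl j ∨ ∃ a, x = Sum.inr (i, a) := by
  simp [EE, eq_comm]

lemma EE_inj {r s : ℕ} (hr : 3 ≤ r) {i i' : Fin s} {j j' : Fin 2}
    (h : EE r s i j = EE r s i' j') : i = i' ∧ j = j' := by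
  constructor
  · have hm : (Sum.inr (i, ⟨0, by omega⟩) : Vt r s) ∈ EE r s i j :=
      mem_EE.mpr (Or.inr ⟨_, rfl⟩)
    rw [h, mem_EE] at hm
    rcases hm with hm | ⟨a, hm⟩
    · exact absurd hm (by simp)
    · exact congrArg Prod.fst (Sum.inr.inj hm)
  · have hm : (Sum.inl j : Vt r s) ∈ EE r s i j := Finset.mem_insert_self _ _
    rw [h, mem_EE] at hm
    rcases hm with hm | ⟨a, hm⟩
    · exact Sum.inl.inj hm
    · exact absurd hm (by simp)

/-- the vertex `v_j` as a node of the incidence graph -/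
def A (r s : ℕ) (j : Fin 2) : Nd r s := Sum.inl (Sum.inl j)

/-- the vertex `u_{i,a}` as a node of the incidence graph -/
def B (r s : ℕ) (i : Fin s) (a : Fin (r - 1)) : Nd r s := Sum.inl (Sum.inr (i, a))

/-- the edge `e_{i,j}` as a node of the incidence graph -/
def C (r s : ℕ) (i : Fin s) (j : Fin 2) : Nd r s :=
  Sum.inr ⟨EE r s i j, EE_mem_H3 r s i j⟩

lemma adjAC (r s : ℕ) (i : Fin s) (j : Fin 2) :
    (incGraph (H3 r s)).Adj (A r s j) (C r s i j) :=
  show (Sum.inl j : Vt r s) ∈ EE r s i j from Finset.mem_insert_self _ _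

lemma adjBC (r s : ℕ) (i : Fin s) (a : Fin (r - 1)) (j : Fin 2) :
    (incGraph (H3 r s)).Adj (B r s i a) (C r s i j) :=
  show (Sum.inr (i, a) : Vt r s) ∈ EE r s i j from mem_EE.mpr (Or.inr ⟨a, rfl⟩)

lemma step {r s : ℕ} (w0 : Nd r s) {x y : Nd r s} (hx : x ≠ w0) (hy : y ≠ w0)
    (h : (incGraph (H3 r s)).Adj x y) :
    ((incGraph (H3 r s)).induce {z | z ≠ w0}).Reachable ⟨x, hx⟩ ⟨y, hy⟩ :=
  SimpleGraph.Adj.reachable h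

/-- a second element of `Fin n` when `2 ≤ n` -/
def flip1 {n : ℕ} (hn : 2 ≤ n) (x : Fin n) : Fin n :=
  ⟨if x.val = 0 then 1 else 0, by split <;> omega⟩

lemma fin2_eq_flip {j j0 : Fin 2} (h : j ≠ j0) : j = flip1 (le_refl 2) j0 := by
  revert h; revert j j0; decide

lemma flip1_ne {n : ℕ} (hn : 2 ≤ n) (x : Fin n) : flip1 hn x ≠ x := by
  simp only [Ne, flip1, Fin.ext_iff]
  split <;> omega

lemma conn {r s : ℕ} (hr : 3 ≤ r) (hs : 2 ≤ s) (w0 : Nd r s) :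
    ((incGraph (H3 r s)).induce {z | z ≠ w0}).Connected := by
  classical
  have hr1 : 2 ≤ r - 1 := by omega
  set G := incGraph (H3 r s) with hG
  suffices H : ∃ h0 : Nd r s, ∃ hh : h0 ≠ w0,
      (∀ j (hj : A r s j ≠ w0),
        (G.induce {z | z ≠ w0}).Reachable ⟨A r s j, hj⟩ ⟨h0, hh⟩) ∧
      (∀ i a (hb : B r s i a ≠ w0),
        (G.induce {z | z ≠ w0}).Reachable ⟨B r s i a, hb⟩ ⟨h0, hh⟩) ∧
      (∀ i j (hc : C r s i j ≠ w0),
        (G.induce {z | z ≠ w0}).Reachable ⟨C r s i j, hc⟩ ⟨h0, hh⟩) by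
    obtain ⟨h0, hh, hA, hB, hC⟩ := H
    have key : ∀ z (hz : z ≠ w0),
        (G.induce {z | z ≠ w0}).Reachable ⟨z, hz⟩ ⟨h0, hh⟩ := by
      intro z hz
      rcases z with (jz | ⟨iz, az⟩) | f
      · exact hA jz hz
      · exact hB iz az hz
      · obtain ⟨i, j, hf⟩ := mem_H3 f.2
        have hfe : (Sum.inr f : Nd r s) = C r s i j :=
          congrArg Sum.inr (Subtype.ext hf)
        have hne : C r s i j ≠ w0 := hfe ▸ hz
        have : (⟨Sum.inr f, hz⟩ : {z : Nd r s // z ≠ w0}) = ⟨C r s i j, hne⟩ :=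
          Subtype.ext hfe
        rw [this]
        exact hC i j hne
    exact { preconnected := fun x y => (key x.1 x.2).trans (key y.1 y.2).symm,
            nonempty := ⟨⟨h0, hh⟩⟩ }
  rcases w0 with (j0 | ⟨i0, b0⟩) | f
  · -- w0 = A j0 ; hub = A (flip1 _ j0)
    set j1 := flip1 (le_refl 2) j0 with hj1
    have hub_ne : A r s j1 ≠ Sum.inl (Sum.inl j0) := by
      simp only [A, Ne, Sum.inl.injEq]
      exact fun h => flip1_ne _ j0 h
    have hCne : ∀ (i : Fin s) (j : Fin 2), C r s i j ≠ Sum.inl (Sum.inl j0) := by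
      intro i j; simp [C]
    have hBne : ∀ (i : Fin s) (a : Fin (r - 1)),
        B r s i a ≠ Sum.inl (Sum.inl j0) := by intro i a; simp [B]
    have hB : ∀ i a (hb : B r s i a ≠ Sum.inl (Sum.inl j0)),
        (G.induce {z | z ≠ Sum.inl (Sum.inl j0)}).Reachable
          ⟨B r s i a, hb⟩ ⟨A r s j1, hub_ne⟩ := by
      intro i a hb
      exact (step _ hb (hCne i j1) (adjBC r s i a j1)).trans
        (step _ (hCne i j1) hub_ne (adjAC r s i j1).symm)
    refine ⟨A r s j1, hub_ne, ?_, hB, ?_⟩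
    · intro j hj
      have hjne : j ≠ j0 := by simpa [A] using hj
      have hjj : j = j1 := fin2_eq_flip hjne
      have heq : (⟨A r s j, hj⟩ : {z : Nd r s // z ≠ Sum.inl (Sum.inl j0)}) =
          ⟨A r s j1, hub_ne⟩ := Subtype.ext (congrArg (A r s) hjj)
      rw [heq]
    · intro i j hc
      exact (step _ hc (hBne i ⟨0, by omega⟩)
        (adjBC r s i ⟨0, by omega⟩ j).symm).trans (hB i _ _)
  · -- w0 = B i0 b0 ; hub = A 0
    have hub_ne : A r s 0 ≠ Sum.inl (Sum.inr (i0, b0)) := by simp [A]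
    set b1 := flip1 hr1 b0 with hb1
    have hBne : ∀ i : Fin s, B r s i b1 ≠ Sum.inl (Sum.inr (i0, b0)) := by
      intro i
      simp only [B, Ne, Sum.inl.injEq, Sum.inr.injEq, Prod.mk.injEq, not_and]
      exact fun _ h => flip1_ne hr1 b0 h
    have hCne : ∀ (i : Fin s) (j : Fin 2),
        C r s i j ≠ Sum.inl (Sum.inr (i0, b0)) := by intro i j; simp [C]
    have hC : ∀ i j (hc : C r s i j ≠ Sum.inl (Sum.inr (i0, b0))),
        (G.induce {z | z ≠ Sum.inl (Sum.inr (i0, b0))}).Reachable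
          ⟨C r s i j, hc⟩ ⟨A r s 0, hub_ne⟩ := by
      intro i j hc
      refine (step _ hc (hBne i) (adjBC r s i b1 j).symm).trans ?_
      refine (step _ (hBne i) (hCne i 0) (adjBC r s i b1 0)).trans ?_
      exact step _ (hCne i 0) hub_ne (adjAC r s i 0).symm
    refine ⟨A r s 0, hub_ne, ?_, ?_, hC⟩
    · intro j hj
      exact (step _ hj (hCne i0 j) (adjAC r s i0 j)).trans (hC i0 j _)
    · intro i a hb
      exact (step _ hb (hCne i 0) (adjBC r s i a 0)).trans (hC i 0 _)
  · -- w0 = an edge node ; hub = A 0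
    obtain ⟨i0, j0, hf⟩ := mem_H3 f.2
    have hub_ne : A r s 0 ≠ Sum.inr f := by simp [A]
    have hBne : ∀ (i : Fin s) (a : Fin (r - 1)),
        B r s i a ≠ Sum.inr f := by intro i a; simp [B]
    have hAne : ∀ j : Fin 2, A r s j ≠ Sum.inr f := by intro j; simp [A]
    have hCne : ∀ (i : Fin s) (j : Fin 2), i ≠ i0 ∨ j ≠ j0 →
        C r s i j ≠ Sum.inr f := by
      intro i j hij hCC
      have : EE r s i j = EE r s i0 j0 := by
        have := (Sum.inr.inj hCC)
        rw [← hf]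
        exact congrArg Subtype.val this
      rcases hij with hi | hj
      · exact hi (EE_inj hr this).1
      · exact hj (EE_inj hr this).2
    set i1 := flip1 hs i0 with hi1
    set j1 := flip1 (le_refl 2) j0 with hj1
    have hCi1 : ∀ j : Fin 2, C r s i1 j ≠ Sum.inr f :=
      fun j => hCne i1 j (Or.inl (flip1_ne hs i0))
    have hA : ∀ j (hj : A r s j ≠ Sum.inr f),
        (G.induce {z | z ≠ Sum.inr f}).Reachable ⟨A r s j, hj⟩ ⟨A r s 0, hub_ne⟩ := by
      intro j hj
      refine (step _ hj (hCi1 j) (adjAC r s i1 j)).trans ?_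
      refine (step _ (hCi1 j) (hBne i1 ⟨0, by omega⟩) (adjBC r s i1 ⟨0, by omega⟩ j).symm).trans ?_
      refine (step _ (hBne i1 _) (hCi1 0) (adjBC r s i1 ⟨0, by omega⟩ 0)).trans ?_
      exact step _ (hCi1 0) hub_ne (adjAC r s i1 0).symm
    have hC : ∀ i j (hc : C r s i j ≠ Sum.inr f),
        (G.induce {z | z ≠ Sum.inr f}).Reachable ⟨C r s i j, hc⟩ ⟨A r s 0, hub_ne⟩ :=
      fun i j hc => (step _ hc (hAne j) (adjAC r s i j).symm).trans (hA j _)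
    refine ⟨A r s 0, hub_ne, hA, ?_, hC⟩
    intro i a hb
    have hcj1 : C r s i j1 ≠ Sum.inr f := hCne i j1 (Or.inr (flip1_ne _ j0))
    exact (step _ hb hcj1 (adjBC r s i a j1)).trans (hC i j1 _)

lemma no_berge (r s : ℕ) (ℓ : ℕ) (hl : 4 < ℓ) : ¬ HasBergeCycle (H3 r s) ℓ := by
  rintro ⟨v, e, hv, he, h⟩
  haveI : NeZero ℓ := ⟨by omega⟩
  haveI : Fact (1 < ℓ) := ⟨by omega⟩
  choose u j hej using fun i => mem_H3 (r := r) (s := s) (h i).1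
  have hpair : Function.Injective (fun i => (u i, j i)) := by
    intro a b hab
    simp only [Prod.mk.injEq] at hab
    exact he (by rw [hej a, hej b, hab.1, hab.2])
  classical
  set S : Finset (ZMod ℓ) := Finset.univ.filter (fun i => u i ≠ u (i + 1)) with hSdef
  -- on S, v (i+1) is a left vertex
  have hSb : ∀ i ∈ S, ∃ b : Fin 2, v (i + 1) = Sum.inl b := by
    intro i hi
    have hi' : u i ≠ u (i + 1) := by simpa [hSdef] using hi
    have h1 : v (i + 1) ∈ EE r s (u i) (j i) := by rw [← hej i]; exact (h i).2.2
    have h2 : v (i + 1) ∈ EE r s (u (i + 1)) (j (i + 1)) := by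
      rw [← hej (i + 1)]; exact (h (i + 1)).2.1
    rw [mem_EE] at h1 h2
    rcases h1 with h1 | ⟨a, h1⟩
    · exact ⟨_, h1⟩
    rcases h2 with h2 | ⟨a', h2⟩
    · rw [h1] at h2; exact absurd h2 (by simp)
    · rw [h1] at h2
      exact absurd (congrArg Prod.fst (Sum.inr.inj h2)) hi'
  have hcardS : S.card ≤ 2 := by
    have key := Finset.card_le_card_of_injOn
      (f := fun i => if hb : ∃ b : Fin 2, v (i + 1) = Sum.inl b then hb.choose
        else (0 : Fin 2)) (t := (Finset.univ : Finset (Fin 2)))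
      (s := S) (fun a _ => Finset.mem_univ _) ?_
    · simpa using key
    · intro a ha b hb hab
      simp only [dif_pos (hSb a ha), dif_pos (hSb b hb)] at hab
      have hva : v (a + 1) = v (b + 1) := by
        rw [(hSb a ha).choose_spec, (hSb b hb).choose_spec, hab]
      exact add_right_cancel (hv hva)
  have hone : (1 : ZMod ℓ) ≠ 0 := one_ne_zero
  have htwo : (2 : ZMod ℓ) ≠ 0 := by
    intro h2
    have h2' : ((2 : ℕ) : ZMod ℓ) = 0 := by exact_mod_cast h2
    rw [ZMod.natCast_eq_zero_iff] at h2'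
    have := Nat.le_of_dvd (by norm_num) h2'
    omega
  -- no two consecutive indices outside S
  have hstep : ∀ i : ZMod ℓ, u i = u (i + 1) → u (i + 1) = u (i + 1 + 1) → False := by
    intro i h1 h2
    have d1 : i ≠ i + 1 := fun hh => hone (left_eq_add.mp hh)
    have d2 : i ≠ i + 1 + 1 := by
      intro hh
      rw [add_assoc] at hh
      have := left_eq_add.mp hh
      exact htwo (by rw [← this]; ring)
    have d3 : (i + 1 : ZMod ℓ) ≠ i + 1 + 1 := fun hh => hone (left_eq_add.mp hh)
    have e1 : j i ≠ j (i + 1) := fun hj => d1 (hpair (by simp [Prod.ext_iff, h1, hj]))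
    have e2 : j i ≠ j (i + 1 + 1) := fun hj =>
      d2 (hpair (by simp [Prod.ext_iff, h1.trans h2, hj]))
    have e3 : j (i + 1) ≠ j (i + 1 + 1) := fun hj =>
      d3 (hpair (by simp [Prod.ext_iff, h2, hj]))
    have b1 := (j i).isLt
    have b2 := (j (i + 1)).isLt
    have b3 := (j (i + 1 + 1)).isLt
    rw [Ne, Fin.ext_iff] at e1 e2 e3
    omega
  have hmaps : ∀ i ∈ Sᶜ, i + 1 ∈ S := by
    intro i hi
    rw [Finset.mem_compl] at hi
    simp only [hSdef, Finset.mem_filter, Finset.mem_univ, true_and, not_not] at hi ⊢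
    exact fun hh => hstep i hi hh
  have hcardSc : Sᶜ.card ≤ S.card :=
    Finset.card_le_card_of_injOn (fun i => i + 1) hmaps
      (fun a _ b _ hab => by exact add_right_cancel hab)
  have hcards : S.card + Sᶜ.card = ℓ := by
    rw [Finset.card_add_card_compl, Fintype.card_eq_nat_card, Nat.card_zmod]
  omega

end H3Aux

theorem stmt_5 (r s : ℕ) (hr : 3 ≤ r) (hs : 2 ≤ s) :
    TwoConnected (incGraph (H3 r s)) ∧
    ∀ ℓ : ℕ, 4 < ℓ → ¬ HasBergeCycle (H3 r s) ℓ := by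
  refine ⟨⟨?_, fun v => H3Aux.conn hr hs v⟩, fun ℓ hℓ => H3Aux.no_berge r s ℓ hℓ⟩
  classical
  simp only [Nat.card_eq_fintype_card, Fintype.card_sum, Fintype.card_prod,
    Fintype.card_fin]
  have h1 : 2 * 2 ≤ s * (r - 1) := Nat.mul_le_mul hs (by omega)
  omega
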